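/- For fixed reduced fraction c = p/q ∈ (0,1), the total number w(n, c) of binary vectors y ∈ {0,1}^n with both classes nonempty achieving AUC = c equals Σ_{n₁ ∈ 𝒩₁} v(n - n₁, n₁, (q-p)(n-n₁)n₁/q), where 𝒩₁ = {n₁ : 0 < n₁ < n and q divides (n - n₁)n₁}, and the sets of vectors for distinct n₁ ∈ 𝒩₁ are pairwise disjoint. -/

import Mathlib

open scoped Classical

/-- Number of misclassified pairs: `h(y) = |{(i,j) : yᵢ = 0, yⱼ = 1, i > j}|`. -/
def hcount {n : ℕ} (y : Fin n → Bool) : ℕ :=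
  (Finset.univ.filter (fun ij : Fin n × Fin n =>
      y ij.1 = false ∧ y ij.2 = true ∧ ij.2 < ij.1)).card

/-- Number of ones of a binary vector. -/
def ones {n : ℕ} (y : Fin n → Bool) : ℕ :=
  (Finset.univ.filter (fun i => y i = true)).card

/-- `v(n₀, n₁, d)` = number of binary vectors of length `n₀ + n₁` with exactly
`n₁` ones and `h`-value `d`. -/
def v (n₀ n₁ d : ℕ) : ℕ :=
  (Finset.univ.filter (fun y : Fin (n₀ + n₁) → Bool =>
      ones y = n₁ ∧ hcount y = d)).card

lemma v_eq {n₀ n₁ n d : ℕ} (h : n₀ + n₁ = n) :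
    v n₀ n₁ d = (Finset.univ.filter (fun y : Fin n → Bool =>
      ones y = n₁ ∧ hcount y = d)).card := by subst h; rfl

lemma rat_key (p q h m : ℕ) (hp : 0 < p) (hpq : p < q) (hm : 0 < m) :
    ((1 : ℚ) - (h:ℚ)/(m:ℚ) = (p:ℚ)/(q:ℚ)) ↔ h * q = (q - p) * m := by
  have hq : 0 < q := hp.trans hpq
  rw [sub_eq_iff_eq_add, div_add_div _ _ (by positivity : (q:ℚ) ≠ 0) (by positivity : (m:ℚ) ≠ 0),
    eq_div_iff (by positivity : (q:ℚ)*(m:ℚ) ≠ 0), one_mul]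
  constructor
  · intro H
    have h1 : (h:ℚ) * q = ((q:ℚ) - p) * m := by ring_nf; ring_nf at H; linarith
    have h2 : (h:ℚ) * q = (((q - p : ℕ)):ℚ) * m := by rw [Nat.cast_sub hpq.le]; exact h1
    exact_mod_cast h2
  · intro H
    have h2 : (h:ℚ) * q = (((q - p : ℕ)):ℚ) * m := by exact_mod_cast H
    rw [Nat.cast_sub hpq.le] at h2
    ring_nf; ring_nf at h2; linarith

lemma nat_key (p q h m : ℕ) (hp : 0 < p) (hpq : p < q) (hcop : Nat.Coprime p q) :
    h * q = (q - p) * m ↔ (q ∣ m ∧ h = (q - p) * m / q) := by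
  have hq : 0 < q := hp.trans hpq
  have hcop' : Nat.Coprime (q - p) q := by
    have h1 : Nat.Coprime (q - p) p := (Nat.coprime_sub_self_left hpq.le).mpr hcop.symm
    have h2 := (Nat.coprime_add_self_right (m := q - p) (n := p)).mpr h1
    rwa [show p + (q - p) = q by omega] at h2
  constructor
  · intro H
    have hdvd : q ∣ (q - p) * m := ⟨h, by rw [← H]; ring⟩
    have hqm : q ∣ m := (Nat.Coprime.dvd_of_dvd_mul_left hcop'.symm hdvd)
    exact ⟨hqm, by rw [← H, Nat.mul_div_cancel _ hq]⟩
  · rintro ⟨hqm, rfl⟩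
    obtain ⟨k, rfl⟩ := hqm
    exact Nat.div_mul_cancel ⟨(q - p) * k, by ring⟩

/-- For a reduced fraction `c = p/q ∈ (0,1)`, the total number `w(n, c)` of
binary vectors with both classes nonempty achieving `AUC = 1 - h/(n₀n₁) = p/q`
equals `∑_{n₁ ∈ 𝒩₁} v(n - n₁, n₁, (q-p)(n-n₁)n₁/q)` where
`𝒩₁ = {n₁ : 0 < n₁ < n ∧ q ∣ (n-n₁)n₁}`, and the sets of vectors for distinct
`n₁ ∈ 𝒩₁` are pairwise disjoint. -/
theorem w_eq_sum_v (n p q : ℕ) (hp : 0 < p) (hpq : p < q) (hcop : Nat.Coprime p q)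
    (N₁ : Finset ℕ)
    (hN₁ : N₁ = (Finset.range n).filter (fun n₁ => 0 < n₁ ∧ q ∣ (n - n₁) * n₁))
    (auc : (Fin n → Bool) → Prop)
    (hauc : ∀ y, auc y ↔
      (1 : ℚ) - (hcount y : ℚ) / (((n - ones y) * ones y : ℕ) : ℚ) = (p : ℚ) / (q : ℚ))
    (S : ℕ → Finset (Fin n → Bool))
    (hS : ∀ n₁, S n₁ = Finset.univ.filter (fun y => ones y = n₁ ∧ auc y)) :
    (Finset.univ.filter (fun y : Fin n → Bool =>
        0 < ones y ∧ ones y < n ∧ auc y)).card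
      = (∑ n₁ ∈ N₁, v (n - n₁) n₁ ((q - p) * ((n - n₁) * n₁) / q))
    ∧ ∀ a ∈ N₁, ∀ b ∈ N₁, a ≠ b → Disjoint (S a) (S b) := by
  have hq : 0 < q := hp.trans hpq
  -- characterization of auc for vectors with 0 < ones < n
  have key : ∀ y : Fin n → Bool, 0 < ones y → ones y < n →
      (auc y ↔ (q ∣ (n - ones y) * ones y ∧
        hcount y = (q - p) * ((n - ones y) * ones y) / q)) := by
    intro y h0 h1
    have hm : 0 < (n - ones y) * ones y := Nat.mul_pos (by omega) h0
    rw [hauc, rat_key p q _ _ hp hpq hm, nat_key p q _ _ hp hpq hcop]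
  constructor
  · rw [Finset.card_eq_sum_card_fiberwise (f := fun y => ones y) (t := N₁)
      (fun y hy => by
        simp only [Finset.mem_coe, Finset.mem_filter, Finset.mem_univ, true_and] at hy
        rw [hN₁]
        simp only [Finset.mem_coe, Finset.mem_filter, Finset.mem_range]
        exact ⟨hy.2.1, hy.1, ((key y hy.1 hy.2.1).mp hy.2.2).1⟩)]
    refine Finset.sum_congr rfl (fun n₁ hn₁ => ?_)
    rw [hN₁] at hn₁
    simp only [Finset.mem_filter, Finset.mem_range] at hn₁
    obtain ⟨hlt, hpos, hdvd⟩ := hn₁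
    rw [v_eq (Nat.sub_add_cancel hlt.le)]
    congr 1
    ext y
    simp only [Finset.mem_filter, Finset.mem_univ, true_and]
    constructor
    · rintro ⟨⟨h0, h1, ha⟩, rfl⟩
      exact ⟨rfl, ((key y h0 h1).mp ha).2⟩
    · rintro ⟨rfl, hh⟩
      exact ⟨⟨hpos, hlt, (key y hpos hlt).mpr ⟨hdvd, hh⟩⟩, rfl⟩
  · intro a _ b _ hab
    rw [hS, hS, Finset.disjoint_left]
    intro y hy hy'
    simp only [Finset.mem_filter] at hy hy'
    exact hab (hy.2.1 ▸ hy'.2.1 ▸ rfl)
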